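/- Generating function for φ_n^{(a,b)}: ∑_{n=0}^∞ φ_n^{(a,b)}(x,y|q) t^n/(q;q)_n = (1/(yt;q)_∞) · ∑_{n=0}^∞ ((a_1,…,a_{r+1};q)_n / ((q;q)_n (b_1,…,b_r;q)_n)) (xt)^n, valid for max{|xt|, |yt|} < 1. -/

import Mathlib

noncomputable def qPoch (x q : ℂ) (n : ℕ) : ℂ := ∏ j ∈ Finset.range n, (1 - x * q ^ j)

noncomputable def qPochInf (x q : ℂ) : ℂ := ∏' j : ℕ, (1 - x * q ^ j)

noncomputable def qBinom (q : ℂ) (n k : ℕ) : ℂ := qPoch q q n / (qPoch q q k * qPoch q q (n - k))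

noncomputable def Dq (q : ℂ) (f : ℂ → ℂ) : ℂ → ℂ := fun a => (f a - f (q * a)) / ((1 - q) * a)

noncomputable def Dqinv (q : ℂ) (f : ℂ → ℂ) : ℂ → ℂ := fun a => (f (q⁻¹ * a) - f a) / ((q⁻¹ - 1) * a)

noncomputable def mPoch {m : ℕ} (a : Fin m → ℂ) (q : ℂ) (k : ℕ) : ℂ := ∏ i, qPoch (a i) q k

noncomputable def phi {r : ℕ} (a : Fin (r + 1) → ℂ) (b : Fin r → ℂ) (q x y : ℂ) (n : ℕ) : ℂ :=
  ∑ k ∈ Finset.range (n + 1), qBinom q n k * (mPoch a q k / mPoch b q k) * x ^ k * y ^ (n - k)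

noncomputable def psi {r : ℕ} (a : Fin (r + 1) → ℂ) (b : Fin r → ℂ) (q x y : ℂ) (n : ℕ) : ℂ :=
  ∑ k ∈ Finset.range (n + 1), qBinom q n k * (mPoch a q k / mPoch b q k) *
    q ^ ((((k + 1).choose 2 : ℕ) : ℤ) - (n : ℤ) * (k : ℤ)) * x ^ k * y ^ (n - k)

open Filter Finset Topology

namespace Stmt14Aux

variable {q : ℂ}

lemma qPoch_succ (w : ℂ) (n : ℕ) :
    qPoch w q (n + 1) = qPoch w q n * (1 - w * q ^ n) := Finset.prod_range_succ _ _

lemma norm_mul_pow_lt (hq1 : ‖q‖ < 1) {z : ℂ} (hz : ‖z‖ < 1) (j : ℕ) : ‖z * q ^ j‖ < 1 := by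
  rw [norm_mul, norm_pow]
  have h1 : ‖q‖ ^ j ≤ 1 := pow_le_one₀ (norm_nonneg q) hq1.le
  nlinarith [norm_nonneg z]

lemma factor_ne (hq1 : ‖q‖ < 1) {z : ℂ} (hz : ‖z‖ < 1) (j : ℕ) :
    (1 : ℂ) - z * q ^ j ≠ 0 := by
  rw [sub_ne_zero]
  intro h1
  have := norm_mul_pow_lt hq1 hz j
  rw [← h1] at this
  simp at this

lemma qPoch_ne (hq1 : ‖q‖ < 1) {z : ℂ} (hz : ‖z‖ < 1) (n : ℕ) : qPoch z q n ≠ 0 :=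
  Finset.prod_ne_zero_iff.mpr fun j _ => factor_ne hq1 hz j

lemma mPoch_ne {s : ℕ} {v : Fin s → ℂ} (hv : ∀ i n, qPoch (v i) q n ≠ 0) (n : ℕ) :
    mPoch v q n ≠ 0 :=
  Finset.prod_ne_zero_iff.mpr fun i _ => hv i n

lemma mPoch_succ {s : ℕ} (u : Fin s → ℂ) (n : ℕ) :
    mPoch u q (n + 1) = mPoch u q n * ∏ i, (1 - u i * q ^ n) := by
  unfold mPoch
  rw [← Finset.prod_mul_distrib]
  exact Finset.prod_congr rfl fun i _ => qPoch_succ _ _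

lemma tendsto_qpow (hq1 : ‖q‖ < 1) : Tendsto (fun n => q ^ n) atTop (𝓝 0) :=
  tendsto_pow_atTop_nhds_zero_of_norm_lt_one hq1

lemma tendsto_factor (hq1 : ‖q‖ < 1) (w : ℂ) :
    Tendsto (fun n => 1 - w * q ^ n) atTop (𝓝 1) := by
  have := (tendsto_const_nhds (x := (1 : ℂ))).sub
    ((tendsto_const_nhds (x := w)).mul (tendsto_qpow hq1))
  simpa using this

lemma tendsto_prod_factor (hq1 : ‖q‖ < 1) {s : ℕ} (u : Fin s → ℂ) :
    Tendsto (fun n => ∏ i, (1 - u i * q ^ n)) atTop (𝓝 1) := by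
  have := tendsto_finset_prod (Finset.univ : Finset (Fin s))
    (f := fun i n => 1 - u i * q ^ n) (a := fun _ => 1) (fun i _ => tendsto_factor hq1 (u i))
  simpa using this

lemma summable_norm_gen (hq1 : ‖q‖ < 1) {s s' : ℕ} (u : Fin s → ℂ) (v : Fin s' → ℂ)
    (hv : ∀ i n, qPoch (v i) q n ≠ 0) {z : ℂ} (hz : ‖z‖ < 1) :
    Summable fun n => ‖mPoch u q n / (qPoch q q n * mPoch v q n) * z ^ n‖ := by
  set c : ℕ → ℂ := fun n => mPoch u q n / (qPoch q q n * mPoch v q n) * z ^ n with hc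
  by_cases hzero : ∃ K, mPoch u q K = 0
  · obtain ⟨K, hK⟩ := hzero
    apply summable_of_ne_finset_zero (s := Finset.range K)
    intro n hn
    have hKn : K ≤ n := by simpa using hn
    obtain ⟨i, -, hi⟩ := Finset.prod_eq_zero_iff.mp hK
    obtain ⟨j, hj, hj0⟩ := Finset.prod_eq_zero_iff.mp hi
    have h1 : qPoch (u i) q n = 0 :=
      Finset.prod_eq_zero (Finset.mem_range.mpr (lt_of_lt_of_le (Finset.mem_range.mp hj) hKn)) hj0
    have h2 : mPoch u q n = 0 := Finset.prod_eq_zero (Finset.mem_univ i) h1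
    simp [hc, h2]
  · push_neg at hzero
    by_cases hz0 : z = 0
    · apply summable_of_ne_finset_zero (s := Finset.range 1)
      intro n hn
      have : n ≠ 0 := by simpa using hn
      simp [hc, hz0, zero_pow this]
    · have hcne : ∀ n, c n ≠ 0 := by
        intro n
        exact mul_ne_zero (div_ne_zero (hzero n)
          (mul_ne_zero (qPoch_ne hq1 hq1 n) (mPoch_ne hv n))) (pow_ne_zero n hz0)
      set R : ℕ → ℂ := fun n =>
        z * (∏ i, (1 - u i * q ^ n)) / ((1 - q * q ^ n) * ∏ i, (1 - v i * q ^ n)) with hR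
      have key : ∀ n, c (n + 1) = R n * c n := by
        intro n
        have hq' : qPoch q q n ≠ 0 := qPoch_ne hq1 hq1 n
        have hm' : mPoch v q n ≠ 0 := mPoch_ne hv n
        have hfq : (1 : ℂ) - q * q ^ n ≠ 0 :=
          right_ne_zero_of_mul ((qPoch_succ q n) ▸ qPoch_ne hq1 hq1 (n + 1))
        have hfv : ∀ i, (1 : ℂ) - v i * q ^ n ≠ 0 := fun i =>
          right_ne_zero_of_mul ((qPoch_succ (v i) n) ▸ hv i (n + 1))
        have hfvp : (∏ i, (1 - v i * q ^ n)) ≠ 0 :=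
          Finset.prod_ne_zero_iff.mpr fun i _ => hfv i
        simp only [hc, hR, mPoch_succ, qPoch_succ, pow_succ]
        field_simp
        simp only [mul_comm (q ^ n) (u _)]
      have hRt : Tendsto R atTop (𝓝 z) := by
        have h1 := ((tendsto_const_nhds (x := z)).mul (tendsto_prod_factor hq1 u)).div
          ((tendsto_factor hq1 q).mul (tendsto_prod_factor hq1 v)) (by norm_num)
        rw [mul_one, mul_one, div_one] at h1
        exact h1
      have hratio : Tendsto (fun n => ‖c (n + 1)‖ / ‖c n‖) atTop (𝓝 ‖z‖) := by
        have h1 : ∀ n, ‖c (n + 1)‖ / ‖c n‖ = ‖R n‖ := by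
          intro n
          rw [key n, norm_mul, mul_div_assoc, div_self (norm_ne_zero_iff.mpr (hcne n)), mul_one]
        exact Tendsto.congr (fun n => (h1 n).symm) hRt.norm
      have := summable_of_ratio_test_tendsto_lt_one (f := fun n => ‖c n‖) hz
        (Eventually.of_forall fun n => norm_ne_zero_iff.mpr (hcne n)) ?_
      · exact this
      · refine hratio.congr fun n => ?_
        rw [Real.norm_of_nonneg (norm_nonneg _), Real.norm_of_nonneg (norm_nonneg _)]

noncomputable def F (q z : ℂ) : ℂ := ∑' n : ℕ, z ^ n / qPoch q q n

lemma summable_norm_B (hq1 : ‖q‖ < 1) {z : ℂ} (hz : ‖z‖ < 1) :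
    Summable fun n => ‖z ^ n / qPoch q q n‖ := by
  have h := summable_norm_gen hq1 (u := (Fin.elim0 : Fin 0 → ℂ)) (v := (Fin.elim0 : Fin 0 → ℂ))
    (fun i => i.elim0) hz
  refine h.congr fun n => ?_
  simp [mPoch, div_eq_mul_inv, mul_comm]

lemma norm_smul_lt (hq1 : ‖q‖ < 1) {z : ℂ} (hz : ‖z‖ < 1) (N : ℕ) : ‖q ^ N * z‖ < 1 := by
  rw [norm_mul, norm_pow]
  have h1 : ‖q‖ ^ N ≤ 1 := pow_le_one₀ (norm_nonneg q) hq1.le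
  nlinarith [norm_nonneg z]

lemma funct_eq (hq1 : ‖q‖ < 1) {z : ℂ} (hz : ‖z‖ < 1) : F q (q * z) = (1 - z) * F q z := by
  have hqz : ‖q * z‖ < 1 := by
    have := norm_smul_lt hq1 hz 1
    simpa using this
  have hSz := (summable_norm_B hq1 hz).of_norm
  have hSqz := (summable_norm_B hq1 hqz).of_norm
  have h1 : F q z - F q (q * z) = ∑' n : ℕ, (z ^ n - (q * z) ^ n) / qPoch q q n := by
    rw [F, F, ← Summable.tsum_sub hSz hSqz]
    exact tsum_congr fun n => (sub_div _ _ _).symm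
  have hS3 : Summable (fun n : ℕ => (z ^ n - (q * z) ^ n) / qPoch q q n) :=
    (hSz.sub hSqz).congr fun n => (sub_div _ _ _).symm
  have h2 : ∑' n : ℕ, (z ^ n - (q * z) ^ n) / qPoch q q n = z * F q z := by
    rw [Summable.tsum_eq_zero_add hS3]
    simp only [pow_zero, sub_self, zero_div, zero_add]
    rw [F, ← tsum_mul_left]
    refine tsum_congr fun n => ?_
    have hnz : qPoch q q n ≠ 0 := qPoch_ne hq1 hq1 n
    have hf : (1 : ℂ) - q * q ^ n ≠ 0 := factor_ne hq1 hq1 n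
    rw [qPoch_succ]
    field_simp
    ring
  linear_combination -(h1.trans h2)

lemma multipliable_factors (hq1 : ‖q‖ < 1) {z : ℂ} (hz : ‖z‖ < 1) :
    Multipliable (fun j : ℕ => 1 - z * q ^ j) := by
  apply Complex.multipliable_of_summable_log
  apply Summable.of_norm_bounded_eventually_nat (g := fun n => 3 / 2 * ‖z‖ * ‖q‖ ^ n)
  · exact (summable_geometric_of_lt_one (norm_nonneg q) hq1).mul_left _
  · have h0 : Tendsto (fun n => ‖z * q ^ n‖) atTop (𝓝 0) := by
      have := (tendsto_pow_atTop_nhds_zero_of_norm_lt_one hq1).const_mul z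
      simpa using this.norm
    filter_upwards [h0.eventually_le_const (by norm_num : (0:ℝ) < 1/2)] with n hn
    have hb := Complex.norm_log_one_add_half_le_self (z := -(z * q ^ n)) (by simpa using hn)
    have he : (1 : ℂ) + -(z * q ^ n) = 1 - z * q ^ n := by ring
    rw [he] at hb
    calc ‖Complex.log (1 - z * q ^ n)‖ ≤ 3/2 * ‖-(z * q ^ n)‖ := hb
      _ = 3/2 * ‖z‖ * ‖q‖ ^ n := by rw [norm_neg, norm_mul, norm_pow]; ring

lemma euler (hq1 : ‖q‖ < 1) {z : ℂ} (hz : ‖z‖ < 1) : F q z * qPochInf z q = 1 := by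
  have step : ∀ N, qPoch z q N * F q z = F q (q ^ N * z) := by
    intro N
    induction N with
    | zero => simp [qPoch]
    | succ N ih =>
      have hzN : ‖q ^ N * z‖ < 1 := norm_smul_lt hq1 hz N
      have hfe := funct_eq hq1 hzN
      have e1 : q ^ (N + 1) * z = q * (q ^ N * z) := by ring
      rw [e1, hfe, qPoch_succ, ← ih]
      ring
  have hmult := multipliable_factors hq1 hz
  have hlim1 : Tendsto (fun N => qPoch z q N * F q z) atTop (𝓝 (qPochInf z q * F q z)) := by
    have := (HasProd.tendsto_prod_nat hmult.hasProd).mul_const (F q z)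
    simpa [qPoch, qPochInf] using this
  have hlim2 : Tendsto (fun N => F q (q ^ N * z)) atTop (𝓝 1) := by
    have hbound := summable_norm_B hq1 hz
    have hmain := tendsto_tsum_of_dominated_convergence (𝓕 := atTop)
      (f := fun (N : ℕ) (n : ℕ) => (q ^ N * z) ^ n / qPoch q q n)
      (g := fun n => if n = 0 then 1 else 0)
      (bound := fun n => ‖z ^ n / qPoch q q n‖) hbound ?_ ?_
    · have hg : ∑' n : ℕ, (if n = 0 then (1:ℂ) else 0) = 1 := tsum_ite_eq 0 1
      rw [hg] at hmain
      exact hmain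
    · intro k
      match k with
      | 0 => simpa [qPoch] using tendsto_const_nhds
      | (m + 1) =>
        have hqm : ‖q ^ (m + 1)‖ < 1 := by
          rw [norm_pow]
          exact pow_lt_one₀ (norm_nonneg q) hq1 (Nat.succ_ne_zero m)
        have h1 : Tendsto (fun N : ℕ => (q ^ (m+1)) ^ N) atTop (𝓝 0) :=
          tendsto_pow_atTop_nhds_zero_of_norm_lt_one hqm
        have h2 := h1.mul_const (z ^ (m+1) / qPoch q q (m+1))
        simp only [zero_mul] at h2
        refine Tendsto.congr (fun N => ?_) h2
        simp only [div_eq_mul_inv]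
        ring
    · refine Eventually.of_forall fun N k => ?_
      have hq' : qPoch q q k ≠ 0 := qPoch_ne hq1 hq1 k
      show ‖(q ^ N * z) ^ k / qPoch q q k‖ ≤ ‖z ^ k / qPoch q q k‖
      rw [norm_div, norm_div, norm_pow, norm_pow]
      gcongr
      calc ‖q ^ N * z‖ ≤ 1 * ‖z‖ := by
            rw [norm_mul]
            gcongr
            rw [norm_pow]
            exact pow_le_one₀ (norm_nonneg q) hq1.le
        _ = ‖z‖ := one_mul _
  have := tendsto_nhds_unique (hlim1.congr step) hlim2
  rw [mul_comm]
  exact this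

lemma euler' (hq1 : ‖q‖ < 1) {z : ℂ} (hz : ‖z‖ < 1) :
    (∑' n : ℕ, z ^ n / qPoch q q n) * qPochInf z q = 1 := euler hq1 hz

end Stmt14Aux

open Stmt14Aux in
/-- generating function for `φ_n^{(a,b)}(x,y|q)`. -/
theorem stmt14 (q : ℂ) (hq0 : q ≠ 0) (hq1 : ‖q‖ < 1) {r : ℕ}
    (a : Fin (r + 1) → ℂ) (b : Fin r → ℂ) (hb : ∀ i n, qPoch (b i) q n ≠ 0)
    (x y t : ℂ) (hxt : ‖x * t‖ < 1) (hyt : ‖y * t‖ < 1) :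
    ∑' n : ℕ, phi a b q x y n * t ^ n / qPoch q q n
      = (1 / qPochInf (y * t) q)
          * ∑' n : ℕ, (mPoch a q n / (qPoch q q n * mPoch b q n)) * (x * t) ^ n := by
  have hq1' : ‖q‖ < 1 := hq1
  have hxt' : ‖x * t‖ < 1 := hxt
  have hyt' : ‖y * t‖ < 1 := hyt
  set A : ℕ → ℂ := fun n => mPoch a q n / (qPoch q q n * mPoch b q n) * (x * t) ^ n with hA
  set B : ℕ → ℂ := fun n => (y * t) ^ n / qPoch q q n with hB
  have hAs : Summable fun n => ‖A n‖ := summable_norm_gen hq1' a b hb hxt'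
  have hBs : Summable fun n => ‖B n‖ := summable_norm_B hq1' hyt'
  have term : ∀ n, phi a b q x y n * t ^ n / qPoch q q n
      = ∑ k ∈ Finset.range (n + 1), A k * B (n - k) := by
    intro n
    rw [phi, Finset.sum_mul, Finset.sum_div]
    refine Finset.sum_congr rfl fun k hk => ?_
    have hkn : k ≤ n := Nat.lt_succ_iff.mp (Finset.mem_range.mp hk)
    have htn : t ^ n = t ^ k * t ^ (n - k) := by
      rw [← pow_add, Nat.add_sub_cancel' hkn]
    have h1 : qPoch q q n ≠ 0 := qPoch_ne hq1' hq1' n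
    have h2 : qPoch q q k ≠ 0 := qPoch_ne hq1' hq1' k
    have h3 : qPoch q q (n - k) ≠ 0 := qPoch_ne hq1' hq1' (n - k)
    have h4 : mPoch b q k ≠ 0 := mPoch_ne hb k
    rw [qBinom, htn, hA, hB]
    field_simp
    ring
  have cauchy : ((∑' n, A n) * ∑' n, B n) = ∑' n, ∑ k ∈ Finset.range (n + 1), A k * B (n - k) :=
    tsum_mul_tsum_eq_tsum_sum_range_of_summable_norm hAs hBs
  have heuler := euler' hq1' hyt'
  have hP : qPochInf (y * t) q ≠ 0 := by
    intro h
    rw [h, mul_zero] at heuler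
    exact zero_ne_one heuler
  have hBval : (∑' n, B n) = 1 / qPochInf (y * t) q := by
    field_simp
    exact heuler
  calc ∑' n : ℕ, phi a b q x y n * t ^ n / qPoch q q n
      = ∑' n, ∑ k ∈ Finset.range (n + 1), A k * B (n - k) := tsum_congr term
    _ = (∑' n, A n) * ∑' n, B n := cauchy.symm
    _ = (1 / qPochInf (y * t) q) * ∑' n, A n := by rw [hBval]; ring
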